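/- Let (X, d) be a complete metric space and {S(t)}_{t≥0} a semigroup of continuous maps on X possessing a compact invariant set A (S(t)A = A for all t) and a bounded absorbing set B ⊇ A whose forward images converge to an attractor A₀ of a second semigroup {S₀(t)}: d_H(S₀(T)B, A₀) → 0 as T → ∞, where d_H is the Hausdorff semidistance. Suppose for every T > 0 and every b ∈ B, d(S_ε(T)b, S₀(T)b) ≤ φ(ε, T) with φ(ε, T) → 0 as ε → 0⁺ for fixed T, and each S_ε has a global attractor A_ε ⊆ B that is S_ε-invariant. Then d_H(A_ε, A₀) → 0 as ε → 0⁺. -/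
import Mathlib


open Filter Topology MeasureTheory
open scoped ENNReal

/-- Hausdorff semidistance `d_H(A, B) = sup_{a ∈ A} inf_{b ∈ B} d(a, b)`,
valued in `ℝ≥0∞`. -/
noncomputable def hausSemidist {X : Type*} [PseudoEMetricSpace X] (A B : Set X) : ℝ≥0∞ :=
  ⨆ a ∈ A, EMetric.infEdist a B

/-- Upper semicontinuity of global attractors: if the perturbed semigroups
`S ε` converge to `S₀` uniformly on the common bounded absorbing set `B` over
finite times, the forward images `S₀(T) B` converge to the attractor `A₀` of
the limit semigroup, and each `S ε` has a compact invariant global attractor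
`Aε ε ⊆ B`, then `d_H(Aε ε, A₀) → 0` as `ε → 0⁺`. -/
theorem stmt10 {X : Type*} [MetricSpace X] [CompleteSpace X]
    (S : ℝ → ℝ → X → X) (S₀ : ℝ → X → X)
    (A₀ B : Set X) (Aε : ℝ → Set X) (φ : ℝ → ℝ → ℝ)
    (hA₀ : A₀.Nonempty) (hA₀comp : IsCompact A₀)
    (hB : Bornology.IsBounded B) (hA₀B : A₀ ⊆ B)
    (hcont : ∀ ε > (0 : ℝ), ∀ t ≥ (0 : ℝ), Continuous (S ε t))
    (hsemi : ∀ ε > (0 : ℝ), (∀ x, S ε 0 x = x) ∧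
      ∀ s ≥ (0 : ℝ), ∀ t ≥ (0 : ℝ), ∀ x, S ε (s + t) x = S ε s (S ε t x))
    (hattr : Tendsto (fun T => hausSemidist (S₀ T '' B) A₀) atTop (𝓝 0))
    (hφ : ∀ T > (0 : ℝ), ∀ ε > (0 : ℝ), ∀ b ∈ B, dist (S ε T b) (S₀ T b) ≤ φ ε T)
    (hφ0 : ∀ T > (0 : ℝ), Tendsto (fun ε => φ ε T) (𝓝[>] 0) (𝓝 0))
    (hAcomp : ∀ ε > (0 : ℝ), IsCompact (Aε ε))
    (hAsub : ∀ ε > (0 : ℝ), Aε ε ⊆ B)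
    (hAinv : ∀ ε > (0 : ℝ), ∀ t ≥ (0 : ℝ), S ε t '' Aε ε = Aε ε) :
    Tendsto (fun ε => hausSemidist (Aε ε) A₀) (𝓝[>] 0) (𝓝 0) := by
  rw [ENNReal.tendsto_nhds_zero]
  intro δ hδ
  set η : ℝ≥0∞ := min δ 1 with hη
  have hη0 : (0:ℝ≥0∞) < η := lt_min hδ one_pos
  have hηpos : 0 < η / 2 := ENNReal.half_pos hη0.ne'
  have hηtop : η / 2 ≠ ⊤ := by
    simp only [hη]
    exact (ENNReal.div_lt_top (by simp) (by norm_num)).ne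
  -- choose T
  have h1 : ∀ᶠ T in atTop, hausSemidist (S₀ T '' B) A₀ ≤ η / 2 :=
    ENNReal.tendsto_nhds_zero.mp hattr _ hηpos
  obtain ⟨T, hT1, hT2⟩ := (h1.and (eventually_ge_atTop 1)).exists
  have hTpos : (0:ℝ) < T := lt_of_lt_of_le one_pos hT2
  set r : ℝ := (η / 2).toReal with hr
  have hrpos : 0 < r := ENNReal.toReal_pos hηpos.ne' hηtop
  have h2 : ∀ᶠ ε in 𝓝[>] (0:ℝ), φ ε T < r :=
    (hφ0 T hTpos).eventually_lt_const hrpos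
  filter_upwards [h2, self_mem_nhdsWithin] with ε hφε hεpos
  have hεpos' : (0:ℝ) < ε := hεpos
  apply iSup₂_le
  intro a ha
  rw [← hAinv ε hεpos' T hTpos.le] at ha
  obtain ⟨b, hb, rfl⟩ := ha
  have hbB : b ∈ B := hAsub ε hεpos' hb
  calc EMetric.infEdist (S ε T b) A₀
      ≤ edist (S ε T b) (S₀ T b) + EMetric.infEdist (S₀ T b) A₀ :=
        EMetric.infEdist_le_edist_add_infEdist
    _ ≤ η / 2 + η / 2 := by
        gcongr
        · rw [edist_dist]
          calc ENNReal.ofReal (dist (S ε T b) (S₀ T b))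
              ≤ ENNReal.ofReal r :=
                ENNReal.ofReal_le_ofReal ((hφ T hTpos ε hεpos' b hbB).trans hφε.le)
            _ = η / 2 := ENNReal.ofReal_toReal hηtop
        · exact le_trans (le_iSup₂ (f := fun y (_ : y ∈ S₀ T '' B) => EMetric.infEdist y A₀)
            (S₀ T b) (Set.mem_image_of_mem _ hbB)) hT1
    _ = η := ENNReal.add_halves η
    _ ≤ δ := min_le_left _ _
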